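/- arXiv:1712.06884 — 5 statements merged into one kernel-verified Lean document; each statement's English description precedes it below -/
import Mathlib

section
/- If a bipartite probability distribution p(a,b|x,y) admits a local hidden variable decomposition p(a,b|x,y) = ∫ ρ(λ) p₁(a|x,λ) p₂(b|y,λ) dλ, then the CHSH expression S = |E(0,0) + E(0,1) + E(1,0) − E(1,1)| satisfies S ≤ 2, where E(x,y) = Σ_{a,b∈{±1}} a·b·p(a,b|x,y). -/
open MeasureTheory

noncomputable section

/-- Numerical value `±1` of a Boolean outcome. -/
def sgn (a : Bool) : ℝ := if a then 1 else -1

/-- Correlator `E(x,y) = ∑_{a,b} a·b·p(a,b|x,y)`. -/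
def corrE (p : Bool → Bool → Fin 2 → Fin 2 → ℝ) (x y : Fin 2) : ℝ :=
  ∑ a : Bool, ∑ b : Bool, sgn a * sgn b * p a b x y

lemma chsh_pointwise (a b c d : ℝ) (ha : |a| ≤ 1) (hb : |b| ≤ 1) (hc : |c| ≤ 1)
    (hd : |d| ≤ 1) : |a*c + a*d + b*c - b*d| ≤ 2 := by
  rw [abs_le] at *
  constructor <;> nlinarith [mul_nonneg (by linarith : (0:ℝ) ≤ 1-a) (by linarith : (0:ℝ) ≤ 1-c),
    mul_nonneg (by linarith : (0:ℝ) ≤ 1+a) (by linarith : (0:ℝ) ≤ 1+c),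
    mul_nonneg (by linarith : (0:ℝ) ≤ 1-a) (by linarith : (0:ℝ) ≤ 1+c),
    mul_nonneg (by linarith : (0:ℝ) ≤ 1+a) (by linarith : (0:ℝ) ≤ 1-c),
    mul_nonneg (by linarith : (0:ℝ) ≤ 1-b) (by linarith : (0:ℝ) ≤ 1-d),
    mul_nonneg (by linarith : (0:ℝ) ≤ 1+b) (by linarith : (0:ℝ) ≤ 1+d),
    mul_nonneg (by linarith : (0:ℝ) ≤ 1-b) (by linarith : (0:ℝ) ≤ 1+d),
    mul_nonneg (by linarith : (0:ℝ) ≤ 1+b) (by linarith : (0:ℝ) ≤ 1-d),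
    mul_nonneg (by linarith : (0:ℝ) ≤ 1-a) (by linarith : (0:ℝ) ≤ 1-d),
    mul_nonneg (by linarith : (0:ℝ) ≤ 1+a) (by linarith : (0:ℝ) ≤ 1+d),
    mul_nonneg (by linarith : (0:ℝ) ≤ 1-b) (by linarith : (0:ℝ) ≤ 1-c),
    mul_nonneg (by linarith : (0:ℝ) ≤ 1+b) (by linarith : (0:ℝ) ≤ 1+c)]

/-- If a bipartite distribution admits a local hidden variable decomposition,
then the CHSH expression satisfies `S ≤ 2`. -/
theorem chsh_of_local_hidden_variables
    {Λ : Type*} [MeasurableSpace Λ] (μ : Measure Λ) [IsProbabilityMeasure μ]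
    (p₁ p₂ : Bool → Fin 2 → Λ → ℝ)
    (h₁meas : ∀ a x, Measurable (p₁ a x)) (h₂meas : ∀ b y, Measurable (p₂ b y))
    (h₁nonneg : ∀ a x l, 0 ≤ p₁ a x l) (h₂nonneg : ∀ b y l, 0 ≤ p₂ b y l)
    (h₁sum : ∀ x l, ∑ a : Bool, p₁ a x l = 1) (h₂sum : ∀ y l, ∑ b : Bool, p₂ b y l = 1)
    (p : Bool → Bool → Fin 2 → Fin 2 → ℝ)
    (hp : ∀ a b x y, p a b x y = ∫ l, p₁ a x l * p₂ b y l ∂μ) :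
    |corrE p 0 0 + corrE p 0 1 + corrE p 1 0 - corrE p 1 1| ≤ 2 := by
  have hle₁ : ∀ a x l, p₁ a x l ≤ 1 := by
    intro a x l
    have h := h₁sum x l
    simp [Fintype.sum_bool] at h
    cases a <;> nlinarith [h₁nonneg true x l, h₁nonneg false x l]
  have hle₂ : ∀ b y l, p₂ b y l ≤ 1 := by
    intro b y l
    have h := h₂sum y l
    simp [Fintype.sum_bool] at h
    cases b <;> nlinarith [h₂nonneg true y l, h₂nonneg false y l]
  set A : Fin 2 → Λ → ℝ := fun x l => p₁ true x l - p₁ false x l with hA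
  set B : Fin 2 → Λ → ℝ := fun y l => p₂ true y l - p₂ false y l with hB
  have hAle : ∀ x l, |A x l| ≤ 1 := by
    intro x l
    rw [abs_le]
    constructor <;> simp only [hA] <;>
      nlinarith [h₁nonneg true x l, h₁nonneg false x l, hle₁ true x l, hle₁ false x l]
  have hBle : ∀ y l, |B y l| ≤ 1 := by
    intro y l
    rw [abs_le]
    constructor <;> simp only [hB] <;>
      nlinarith [h₂nonneg true y l, h₂nonneg false y l, hle₂ true y l, hle₂ false y l]
  have hint : ∀ a x b y, Integrable (fun l => p₁ a x l * p₂ b y l) μ := by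
    intro a x b y
    apply (integrable_const (1:ℝ)).mono' ((h₁meas a x).mul (h₂meas b y)).aestronglyMeasurable
    filter_upwards with l
    rw [Real.norm_eq_abs, Pi.mul_apply, abs_of_nonneg (mul_nonneg (h₁nonneg _ _ _) (h₂nonneg _ _ _))]
    calc p₁ a x l * p₂ b y l ≤ 1 * 1 :=
          mul_le_mul (hle₁ a x l) (hle₂ b y l) (h₂nonneg b y l) zero_le_one
      _ = 1 := mul_one 1
  have hintAB : ∀ x y, Integrable (fun l => A x l * B y l) μ := by
    intro x y
    apply (integrable_const (1:ℝ)).mono'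
      (((((h₁meas true x).sub (h₁meas false x))).mul
        ((h₂meas true y).sub (h₂meas false y))).aestronglyMeasurable)
    filter_upwards with l
    rw [Real.norm_eq_abs, Pi.mul_apply, abs_mul]
    calc |A x l| * |B y l| ≤ 1 * 1 :=
          mul_le_mul (hAle x l) (hBle y l) (abs_nonneg _) zero_le_one
      _ = 1 := mul_one 1
  have hcorr : ∀ x y, corrE p x y = ∫ l, A x l * B y l ∂μ := by
    intro x y
    have expand : (fun l => A x l * B y l) = fun l =>
        p₁ true x l * p₂ true y l - p₁ true x l * p₂ false y l
          - p₁ false x l * p₂ true y l + p₁ false x l * p₂ false y l := by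
      funext l; simp only [hA, hB]; ring
    have key : (∫ l, A x l * B y l ∂μ)
        = (∫ l, p₁ true x l * p₂ true y l ∂μ) - (∫ l, p₁ true x l * p₂ false y l ∂μ)
          - (∫ l, p₁ false x l * p₂ true y l ∂μ) + (∫ l, p₁ false x l * p₂ false y l ∂μ) := by
      have i2 : Integrable (fun l => p₁ true x l * p₂ true y l
          - p₁ true x l * p₂ false y l) μ := (hint true x true y).sub (hint true x false y)
      have i3 : Integrable (fun l => p₁ true x l * p₂ true y l - p₁ true x l * p₂ false y l
          - p₁ false x l * p₂ true y l) μ := i2.sub (hint false x true y)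
      rw [expand, integral_add i3 (hint false x false y), integral_sub i2 (hint false x true y),
        integral_sub (hint true x true y) (hint true x false y)]
    rw [key]
    simp only [corrE, sgn, Fintype.sum_bool, hp]
    norm_num
    ring
  have j2 : Integrable (fun l => A 0 l * B 0 l + A 0 l * B 1 l) μ :=
    (hintAB 0 0).add (hintAB 0 1)
  have j3 : Integrable (fun l => A 0 l * B 0 l + A 0 l * B 1 l + A 1 l * B 0 l) μ :=
    j2.add (hintAB 1 0)
  have final : (∫ l, (A 0 l * B 0 l + A 0 l * B 1 l + A 1 l * B 0 l - A 1 l * B 1 l) ∂μ)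
      = corrE p 0 0 + corrE p 0 1 + corrE p 1 0 - corrE p 1 1 := by
    rw [integral_sub j3 (hintAB 1 1), integral_add j2 (hintAB 1 0),
      integral_add (hintAB 0 0) (hintAB 0 1), hcorr 0 0, hcorr 0 1, hcorr 1 0, hcorr 1 1]
  rw [← final]
  have hbound : ∀ᵐ l ∂μ, ‖A 0 l * B 0 l + A 0 l * B 1 l + A 1 l * B 0 l - A 1 l * B 1 l‖ ≤ 2 := by
    filter_upwards with l
    rw [Real.norm_eq_abs]
    exact chsh_pointwise _ _ _ _ (hAle 0 l) (hAle 1 l) (hBle 0 l) (hBle 1 l)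
  have := norm_integral_le_of_norm_le_const hbound
  simpa [measure_univ] using this
end
end

section
/- For a two-qubit state ρ with correlation matrix T whose two largest singular values are t₁ ≥ t₂, the maximum over measurement settings of the quantum CHSH value equals 2√(t₁² + t₂²) (Horodecki criterion); hence ρ violates CHSH iff t₁² + t₂² > 1. -/
open Matrix Complex Kronecker ComplexOrder

noncomputable section

/-- Pauli matrices `σ₁, σ₂, σ₃`. -/
def pauli : Fin 3 → Matrix (Fin 2) (Fin 2) ℂ :=
  ![!![0, 1; 1, 0], !![0, -Complex.I; Complex.I, 0], !![1, 0; 0, -1]]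

/-- Correlation matrix `T_{ij} = Tr(ρ σ_i ⊗ σ_j)` of a two-qubit state. -/
def corrMat (ρ : Matrix (Fin 2 × Fin 2) (Fin 2 × Fin 2) ℂ) : Matrix (Fin 3) (Fin 3) ℝ :=
  Matrix.of fun i j => ((ρ * (pauli i ⊗ₖ pauli j)).trace).re

/-- The set of CHSH values `|⟨a, T b⟩ + ⟨a, T b′⟩ + ⟨a′, T b⟩ − ⟨a′, T b′⟩|` attainable with
unit measurement vectors `a, a′, b, b′ ∈ ℝ³`. -/
def chshValues (T : Matrix (Fin 3) (Fin 3) ℝ) : Set ℝ :=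
  {s | ∃ a a' b b' : Fin 3 → ℝ,
        (∑ i, a i ^ 2 = 1) ∧ (∑ i, a' i ^ 2 = 1) ∧ (∑ i, b i ^ 2 = 1) ∧ (∑ i, b' i ^ 2 = 1) ∧
        s = |a ⬝ᵥ T.mulVec b + a ⬝ᵥ T.mulVec b' + a' ⬝ᵥ T.mulVec b - a' ⬝ᵥ T.mulVec b'|}

lemma key_poly (t1 t2 t3 a b c d e f : ℝ) (ht12 : t2 ≤ t1) (ht23 : t3 ≤ t2) (ht3 : 0 ≤ t3)
    (horth : a*d + b*e + c*f = 0) :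
    (t1^2*a^2 + t2^2*b^2 + t3^2*c^2) * (d^2+e^2+f^2)
      + (t1^2*d^2 + t2^2*e^2 + t3^2*f^2) * (a^2+b^2+c^2)
      ≤ (t1^2+t2^2) * ((a^2+b^2+c^2) * (d^2+e^2+f^2)) := by
  have ht2 : 0 ≤ t2 := le_trans ht3 ht23
  have ht1 : 0 ≤ t1 := le_trans ht2 ht12
  have h12 : t2^2 ≤ t1^2 := by nlinarith
  have h23 : t3^2 ≤ t2^2 := by nlinarith
  have h2 : a*d = -(b*e + c*f) := by linarith
  have h3 : (a*d)^2 = (b*e + c*f)^2 := by rw [h2]; ring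
  nlinarith [mul_nonneg (sub_nonneg.2 h12) (sq_nonneg (b*f - c*e)),
    mul_nonneg (sub_nonneg.2 h23) (sq_nonneg (b*f)),
    mul_nonneg (sub_nonneg.2 h23) (sq_nonneg (c*e)),
    mul_nonneg (sub_nonneg.2 h23) (sq_nonneg (a*f)),
    mul_nonneg (sub_nonneg.2 h23) (sq_nonneg (c*d)),
    mul_nonneg (sub_nonneg.2 h23) (sq_nonneg (c*f)), h3]

lemma two_sqrt (A B P Q K : ℝ) (hA : 0 ≤ A) (hB : 0 ≤ B) (hP : 0 ≤ P) (hQ : 0 ≤ Q)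
    (hK : 0 ≤ K) (hPQ : P + Q = 4)
    (hAP : A ≤ K * P) (hBQ : B ≤ K * Q) (hmain : A * Q + B * P ≤ K * (P * Q)) :
    Real.sqrt A + Real.sqrt B ≤ 2 * Real.sqrt K := by
  have h4K : Real.sqrt (4 * K) = 2 * Real.sqrt K := by
    rw [show (4:ℝ) * K = 2^2 * K by ring, Real.sqrt_mul (by positivity), Real.sqrt_sq (by norm_num)]
  have key : (Real.sqrt A + Real.sqrt B)^2 ≤ 4 * K := by
    rcases eq_or_lt_of_le hP with hP0 | hP0
    · have hA0 : A = 0 := le_antisymm (by nlinarith) hA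
      have : Q = 4 := by linarith
      rw [hA0, Real.sqrt_zero, zero_add, Real.sq_sqrt hB]
      nlinarith
    rcases eq_or_lt_of_le hQ with hQ0 | hQ0
    · have hB0 : B = 0 := le_antisymm (by nlinarith) hB
      have : P = 4 := by linarith
      rw [hB0, Real.sqrt_zero, add_zero, Real.sq_sqrt hA]
      nlinarith
    have hsA := Real.sq_sqrt hA
    have hsB := Real.sq_sqrt hB
    have h1 : ∀ x y : ℝ, (x+y)^2 * (P*Q) ≤ (x^2*Q + y^2*P) * (P+Q) := by
      intro x y
      nlinarith [sq_nonneg (x*Q - y*P), mul_pos hP0 hQ0]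
    have h1' := h1 (Real.sqrt A) (Real.sqrt B)
    rw [hsA, hsB] at h1'
    have h2 : (A * Q + B * P) * (P + Q) ≤ K * (P * Q) * 4 := by
      rw [hPQ]; nlinarith [mul_pos hP0 hQ0]
    have hPQpos : 0 < P * Q := mul_pos hP0 hQ0
    rw [hPQ] at h1'
    nlinarith [h1', h2]
  calc Real.sqrt A + Real.sqrt B = Real.sqrt ((Real.sqrt A + Real.sqrt B)^2) := by
        rw [Real.sqrt_sq (by positivity)]
    _ ≤ Real.sqrt (4 * K) := Real.sqrt_le_sqrt key
    _ = 2 * Real.sqrt K := h4K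

lemma cs3 (u0 u1 u2 x0 x1 x2 : ℝ) (hu : u0^2 + u1^2 + u2^2 = 1) :
    |u0*x0 + u1*x1 + u2*x2| ≤ Real.sqrt (x0^2 + x1^2 + x2^2) := by
  rw [← Real.sqrt_sq_eq_abs]
  apply Real.sqrt_le_sqrt
  nlinarith [sq_nonneg (u0*x1 - u1*x0), sq_nonneg (u0*x2 - u2*x0), sq_nonneg (u1*x2 - u2*x1)]

lemma mid_bound (t1 t2 t3 p0 p1 p2 q0 q1 q2 : ℝ)
    (ht12 : t2 ≤ t1) (ht23 : t3 ≤ t2) (ht3 : 0 ≤ t3)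
    (horth : p0*q0 + p1*q1 + p2*q2 = 0)
    (hPQ : (p0^2+p1^2+p2^2) + (q0^2+q1^2+q2^2) = 4) :
    Real.sqrt ((t1*p0)^2 + (t2*p1)^2 + (t3*p2)^2)
      + Real.sqrt ((t1*q0)^2 + (t2*q1)^2 + (t3*q2)^2) ≤ 2 * Real.sqrt (t1^2+t2^2) := by
  have ht2 : 0 ≤ t2 := le_trans ht3 ht23
  have ht1 : 0 ≤ t1 := le_trans ht2 ht12
  have h12 : t2^2 ≤ t1^2 := by nlinarith
  have h23 : t3^2 ≤ t2^2 := by nlinarith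
  apply two_sqrt _ _ (p0^2+p1^2+p2^2) (q0^2+q1^2+q2^2) _
    (by positivity) (by positivity) (by positivity) (by positivity) (by positivity) hPQ
  · nlinarith [sq_nonneg p0, sq_nonneg p1, sq_nonneg p2]
  · nlinarith [sq_nonneg q0, sq_nonneg q1, sq_nonneg q2]
  · nlinarith [key_poly t1 t2 t3 p0 p1 p2 q0 q1 q2 ht12 ht23 ht3 horth]

lemma reduced_ub (t1 t2 t3 u0 u1 u2 U0 U1 U2 v0 v1 v2 V0 V1 V2 : ℝ)
    (ht12 : t2 ≤ t1) (ht23 : t3 ≤ t2) (ht3 : 0 ≤ t3)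
    (hu : u0^2 + u1^2 + u2^2 = 1) (hU : U0^2 + U1^2 + U2^2 = 1)
    (hv : v0^2 + v1^2 + v2^2 = 1) (hV : V0^2 + V1^2 + V2^2 = 1) :
    |t1*(u0*v0) + t2*(u1*v1) + t3*(u2*v2)
      + (t1*(u0*V0) + t2*(u1*V1) + t3*(u2*V2))
      + (t1*(U0*v0) + t2*(U1*v1) + t3*(U2*v2))
      - (t1*(U0*V0) + t2*(U1*V1) + t3*(U2*V2))|
    ≤ 2 * Real.sqrt (t1^2 + t2^2) := by
  have hsplit : t1*(u0*v0) + t2*(u1*v1) + t3*(u2*v2)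
      + (t1*(u0*V0) + t2*(u1*V1) + t3*(u2*V2))
      + (t1*(U0*v0) + t2*(U1*v1) + t3*(U2*v2))
      - (t1*(U0*V0) + t2*(U1*V1) + t3*(U2*V2))
      = (u0*(t1*(v0+V0)) + u1*(t2*(v1+V1)) + u2*(t3*(v2+V2)))
        + (U0*(t1*(v0-V0)) + U1*(t2*(v1-V1)) + U2*(t3*(v2-V2))) := by ring
  rw [hsplit]
  have hcs1 := cs3 u0 u1 u2 (t1*(v0+V0)) (t2*(v1+V1)) (t3*(v2+V2)) hu
  have hcs2 := cs3 U0 U1 U2 (t1*(v0-V0)) (t2*(v1-V1)) (t3*(v2-V2)) hU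
  have hmid := mid_bound t1 t2 t3 (v0+V0) (v1+V1) (v2+V2) (v0-V0) (v1-V1) (v2-V2)
    ht12 ht23 ht3 (by linear_combination hv - hV) (by linear_combination 2*hv + 2*hV)
  refine le_trans (abs_add_le _ _) ?_
  linarith [hcs1, hcs2, hmid]

open Matrix in
lemma mulVec_norm3 (R : Matrix (Fin 3) (Fin 3) ℝ) (h : Rᵀ * R = 1) (x : Fin 3 → ℝ) :
    (R *ᵥ x) ⬝ᵥ (R *ᵥ x) = x ⬝ᵥ x := by
  rw [dotProduct_mulVec, ← mulVec_transpose, mulVec_mulVec, h, one_mulVec]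

open Matrix in
lemma diag_dot (u w : Fin 3 → ℝ) (t1 t2 t3 : ℝ) :
    u ⬝ᵥ (Matrix.diagonal ![t1,t2,t3]) *ᵥ w
      = t1 * (u 0 * w 0) + t2 * (u 1 * w 1) + t3 * (u 2 * w 2) := by
  simp [dotProduct, mulVec_diagonal, Fin.sum_univ_three]
  ring

/-- Horodecki criterion: the maximal quantum CHSH value of a two-qubit state with
correlation-matrix singular values `t₁ ≥ t₂ ≥ t₃ ≥ 0` is `2√(t₁² + t₂²)`, and the state
violates CHSH iff `t₁² + t₂² > 1`. -/
theorem horodecki_criterion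
    (ρ : Matrix (Fin 2 × Fin 2) (Fin 2 × Fin 2) ℂ)
    (hρ : ρ.PosSemidef) (hρtr : ρ.trace = 1)
    (t₁ t₂ t₃ : ℝ) (h12 : t₁ ≥ t₂) (h23 : t₂ ≥ t₃) (h3 : 0 ≤ t₃)
    (R₁ R₂ : Matrix (Fin 3) (Fin 3) ℝ)
    (hR₁ : R₁ ∈ Matrix.orthogonalGroup (Fin 3) ℝ) (hR₂ : R₂ ∈ Matrix.orthogonalGroup (Fin 3) ℝ)
    (hSVD : corrMat ρ = R₁ * Matrix.diagonal ![t₁, t₂, t₃] * R₂) :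
    IsGreatest (chshValues (corrMat ρ)) (2 * Real.sqrt (t₁ ^ 2 + t₂ ^ 2)) ∧
    ((∃ s ∈ chshValues (corrMat ρ), s > 2) ↔ t₁ ^ 2 + t₂ ^ 2 > 1) := by
  have h2 : 0 ≤ t₂ := le_trans h3 h23
  have h1 : 0 ≤ t₁ := le_trans h2 h12
  have hKnn : (0:ℝ) ≤ t₁^2 + t₂^2 := by positivity
  have hR₁' : R₁ᵀ * R₁ = 1 := by
    have := (Matrix.mem_orthogonalGroup_iff' (Fin 3) ℝ).mp hR₁
    exact this
  have hR₂' : R₂ᵀ * R₂ = 1 := by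
    have := (Matrix.mem_orthogonalGroup_iff' (Fin 3) ℝ).mp hR₂
    exact this
  have hR₁'' : R₁ * R₁ᵀ = 1 := by
    have := (Matrix.mem_orthogonalGroup_iff (Fin 3) ℝ).mp hR₁
    exact this
  have hR₂'' : R₂ * R₂ᵀ = 1 := by
    have := (Matrix.mem_orthogonalGroup_iff (Fin 3) ℝ).mp hR₂
    exact this
  have hval : ∀ x y : Fin 3 → ℝ, x ⬝ᵥ (corrMat ρ) *ᵥ y
      = (x ᵥ* R₁) ⬝ᵥ (Matrix.diagonal ![t₁,t₂,t₃]) *ᵥ (R₂ *ᵥ y) := by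
    intro x y
    rw [hSVD, ← mulVec_mulVec, ← mulVec_mulVec, dotProduct_mulVec]
  have hsum_dot : ∀ x : Fin 3 → ℝ, ∑ i, x i ^ 2 = x ⬝ᵥ x := by
    intro x; simp [dotProduct, sq]
  have hnormA : ∀ x : Fin 3 → ℝ, ∑ i, (x ᵥ* R₁) i ^ 2 = ∑ i, x i ^ 2 := by
    intro x
    rw [hsum_dot, hsum_dot, ← mulVec_transpose,
      mulVec_norm3 R₁ᵀ (by rw [transpose_transpose]; exact hR₁'')]
  have hnormB : ∀ x : Fin 3 → ℝ, ∑ i, (R₂ *ᵥ x) i ^ 2 = ∑ i, x i ^ 2 := by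
    intro x
    rw [hsum_dot, hsum_dot, mulVec_norm3 R₂ hR₂']
  have hnormb : ∀ x : Fin 3 → ℝ, ∑ i, (x ᵥ* R₂) i ^ 2 = ∑ i, x i ^ 2 := by
    intro x
    rw [hsum_dot, hsum_dot, ← mulVec_transpose,
      mulVec_norm3 R₂ᵀ (by rw [transpose_transpose]; exact hR₂'')]
  have hback : ∀ x : Fin 3 → ℝ, (R₁ *ᵥ x) ᵥ* R₁ = x := by
    intro x
    rw [← mulVec_transpose, mulVec_mulVec, hR₁', one_mulVec]
  have hback2 : ∀ x : Fin 3 → ℝ, R₂ *ᵥ (x ᵥ* R₂) = x := by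
    intro x
    rw [← mulVec_transpose, mulVec_mulVec, hR₂'', one_mulVec]
  have e0 : ∀ x y z : ℝ, (![x,y,z] : Fin 3 → ℝ) 0 = x := fun _ _ _ => rfl
  have e1 : ∀ x y z : ℝ, (![x,y,z] : Fin 3 → ℝ) 1 = y := fun _ _ _ => rfl
  have e2 : ∀ x y z : ℝ, (![x,y,z] : Fin 3 → ℝ) 2 = z := fun _ _ _ => rfl
  have hGreatest : IsGreatest (chshValues (corrMat ρ)) (2 * Real.sqrt (t₁ ^ 2 + t₂ ^ 2)) := by
    constructor
    · -- membership
      have hnormA2 : ∀ x : Fin 3 → ℝ, ∑ i, (R₁ *ᵥ x) i ^ 2 = ∑ i, x i ^ 2 := by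
        intro x
        rw [hsum_dot, hsum_dot, mulVec_norm3 R₁ hR₁']
      rcases eq_or_lt_of_le hKnn with hK0 | hKpos
      · have ht1 : t₁ = 0 := by nlinarith
        have ht2 : t₂ = 0 := by nlinarith
        have ht3 : t₃ = 0 := by nlinarith
        refine ⟨R₁ *ᵥ ![1,0,0], R₁ *ᵥ ![0,1,0], ![1,0,0] ᵥ* R₂, ![0,1,0] ᵥ* R₂, ?_, ?_, ?_, ?_, ?_⟩
        · rw [hnormA2, Fin.sum_univ_three, e0, e1, e2]; norm_num
        · rw [hnormA2, Fin.sum_univ_three, e0, e1, e2]; norm_num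
        · rw [hnormb, Fin.sum_univ_three, e0, e1, e2]; norm_num
        · rw [hnormb, Fin.sum_univ_three, e0, e1, e2]; norm_num
        · rw [hval, hval, hval, hval, hback, hback, hback2, hback2,
            diag_dot, diag_dot, diag_dot, diag_dot]
          simp only [e0, e1, e2]
          rw [ht1, ht2, ht3]
          norm_num
      · have hr2 : Real.sqrt (t₁^2 + t₂^2) ^ 2 = t₁^2 + t₂^2 := Real.sq_sqrt hKnn
        have hrpos : 0 < Real.sqrt (t₁^2 + t₂^2) := Real.sqrt_pos.mpr hKpos
        generalize hg : Real.sqrt (t₁^2 + t₂^2) = r at hr2 hrpos ⊢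
        have hrne : r ≠ 0 := ne_of_gt hrpos
        refine ⟨R₁ *ᵥ ![1,0,0], R₁ *ᵥ ![0,1,0], ![t₁/r, t₂/r, 0] ᵥ* R₂,
          ![t₁/r, -(t₂/r), 0] ᵥ* R₂, ?_, ?_, ?_, ?_, ?_⟩
        · rw [hnormA2, Fin.sum_univ_three, e0, e1, e2]; norm_num
        · rw [hnormA2, Fin.sum_univ_three, e0, e1, e2]; norm_num
        · rw [hnormb, Fin.sum_univ_three, e0, e1, e2]
          field_simp
          linarith [hr2]
        · rw [hnormb, Fin.sum_univ_three, e0, e1, e2]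
          field_simp
          linarith [hr2]
        · rw [hval, hval, hval, hval, hback, hback, hback2, hback2,
            diag_dot, diag_dot, diag_dot, diag_dot]
          simp only [e0, e1, e2]
          symm
          rw [abs_eq (by linarith : (0:ℝ) ≤ 2*r)]
          left
          field_simp
          nlinarith [hr2]
    · -- upper bound
      rintro x ⟨a, a', b, b', ha, ha', hb, hb', rfl⟩
      have hu := hnormA a; rw [ha] at hu
      have hu' := hnormA a'; rw [ha'] at hu'
      have hw := hnormB b; rw [hb] at hw
      have hw' := hnormB b'; rw [hb'] at hw'
      rw [Fin.sum_univ_three] at hu hu' hw hw'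
      rw [hval, hval, hval, hval, diag_dot, diag_dot, diag_dot, diag_dot]
      exact reduced_ub t₁ t₂ t₃ _ _ _ _ _ _ _ _ _ _ _ _ h12 h23 h3 hu hu' hw hw'
  refine ⟨hGreatest, ?_, ?_⟩
  · rintro ⟨s, hs, hs2⟩
    have hle := hGreatest.2 hs
    have hsq : 1 < Real.sqrt (t₁^2 + t₂^2) := by linarith
    nlinarith [Real.sq_sqrt hKnn, Real.sqrt_nonneg (t₁^2 + t₂^2)]
  · intro h
    refine ⟨2 * Real.sqrt (t₁^2 + t₂^2), hGreatest.1, ?_⟩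
    have : 1 < Real.sqrt (t₁^2 + t₂^2) := by
      rw [show (1:ℝ) = Real.sqrt 1 by simp]
      exact Real.sqrt_lt_sqrt (by norm_num) h
    linarith
end
end

section
/- If a tripartite probability distribution satisfies p(a,b,c|x,y,z) = p(c|a,b,x,y,z)·p(a,b|x,y) and p(a,b|x,y) = ζ p^{A≺B}(a,b|x,y) + (1−ζ) p^{B≺A}(a,b|x,y) with p^{A≺B} one-way signaling from A to B only (its marginal on a does not depend on y) and p^{B≺A} one-way signaling from B to A only, then p(a,b,c|x,y,z) is a convex mixture of a distribution compatible with the order A≺B≺C and one compatible with B≺A≺C. -/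
noncomputable section

variable {A B C X Y Z : Type*} [Fintype A] [Fintype B] [Fintype C]

/-- `q` is a (conditional) probability distribution over outcomes `(a,b,c)`. -/
def IsTriDist (q : A → B → C → X → Y → Z → ℝ) : Prop :=
  (∀ a b c x y z, 0 ≤ q a b c x y z) ∧
  (∀ x y z, ∑ a, ∑ b, ∑ c, q a b c x y z = 1)

/-- `q` is compatible with the causal order `A ≺ B ≺ C`: the marginal on `a` does not
depend on `y, z`, and the marginal on `(a,b)` does not depend on `z`. -/
def CompatABC (q : A → B → C → X → Y → Z → ℝ) : Prop :=
  (∀ a x y y' z z', ∑ b, ∑ c, q a b c x y z = ∑ b, ∑ c, q a b c x y' z') ∧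
  (∀ a b x y z z', ∑ c, q a b c x y z = ∑ c, q a b c x y z')

/-- `q` is compatible with the causal order `B ≺ A ≺ C`: the marginal on `b` does not
depend on `x, z`, and the marginal on `(a,b)` does not depend on `z`. -/
def CompatBAC (q : A → B → C → X → Y → Z → ℝ) : Prop :=
  (∀ b x x' y z z', ∑ a, ∑ c, q a b c x y z = ∑ a, ∑ c, q a b c x' y z') ∧
  (∀ a b x y z z', ∑ c, q a b c x y z = ∑ c, q a b c x y z')

/-- The quantum SWITCH satisfies causal inequalities: if `p(a,b,c|x,y,z) =
p(c|a,b,x,y,z)·p(a,b|x,y)` with `p(a,b|x,y)` a convex mixture of one-way signaling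
distributions, then `p` is a convex mixture of a distribution compatible with `A≺B≺C`
and one compatible with `B≺A≺C`. -/
theorem switch_satisfies_causal_inequalities
    (p : A → B → C → X → Y → Z → ℝ)
    (pc : C → A → B → X → Y → Z → ℝ)
    (pab pAB pBA : A → B → X → Y → ℝ) (ζ : ℝ)
    (hζ₀ : 0 ≤ ζ) (hζ₁ : ζ ≤ 1)
    (hpc_nonneg : ∀ c a b x y z, 0 ≤ pc c a b x y z)
    (hpc_sum : ∀ a b x y z, ∑ c, pc c a b x y z = 1)
    (hp : ∀ a b c x y z, p a b c x y z = pc c a b x y z * pab a b x y)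
    (hmix : ∀ a b x y, pab a b x y = ζ * pAB a b x y + (1 - ζ) * pBA a b x y)
    (hAB_nonneg : ∀ a b x y, 0 ≤ pAB a b x y) (hBA_nonneg : ∀ a b x y, 0 ≤ pBA a b x y)
    (hAB_sum : ∀ x y, ∑ a, ∑ b, pAB a b x y = 1) (hBA_sum : ∀ x y, ∑ a, ∑ b, pBA a b x y = 1)
    -- `pAB` is one-way signaling from A to B only: its marginal on `a` does not depend on `y`
    (hAB_oneway : ∀ a x y y', ∑ b, pAB a b x y = ∑ b, pAB a b x y')
    -- `pBA` is one-way signaling from B to A only: its marginal on `b` does not depend on `x`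
    (hBA_oneway : ∀ b x x' y, ∑ a, pBA a b x y = ∑ a, pBA a b x' y) :
    ∃ q₁ q₂ : A → B → C → X → Y → Z → ℝ,
      IsTriDist q₁ ∧ IsTriDist q₂ ∧ CompatABC q₁ ∧ CompatBAC q₂ ∧
      ∀ a b c x y z, p a b c x y z = ζ * q₁ a b c x y z + (1 - ζ) * q₂ a b c x y z := by

  refine ⟨fun a b c x y z => pc c a b x y z * pAB a b x y,
         fun a b c x y z => pc c a b x y z * pBA a b x y, ?_, ?_, ?_, ?_, ?_⟩
  · refine ⟨fun a b c x y z => mul_nonneg (hpc_nonneg c a b x y z) (hAB_nonneg a b x y), ?_⟩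
    intro x y z
    have : ∀ a b, ∑ c, pc c a b x y z * pAB a b x y = pAB a b x y := by
      intro a b
      rw [← Finset.sum_mul, hpc_sum, one_mul]
    simp only [this]
    exact hAB_sum x y
  · refine ⟨fun a b c x y z => mul_nonneg (hpc_nonneg c a b x y z) (hBA_nonneg a b x y), ?_⟩
    intro x y z
    have : ∀ a b, ∑ c, pc c a b x y z * pBA a b x y = pBA a b x y := by
      intro a b
      rw [← Finset.sum_mul, hpc_sum, one_mul]
    simp only [this]
    exact hBA_sum x y
  · constructor
    · intro a x y y' z z'
      have h : ∀ y z, ∑ b, ∑ c, pc c a b x y z * pAB a b x y = ∑ b, pAB a b x y := by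
        intro y z
        refine Finset.sum_congr rfl fun b _ => ?_
        rw [← Finset.sum_mul, hpc_sum, one_mul]
      rw [h, h, hAB_oneway a x y y']
    · intro a b x y z z'
      rw [← Finset.sum_mul, ← Finset.sum_mul, hpc_sum, hpc_sum]
  · constructor
    · intro b x x' y z z'
      have h : ∀ x z, ∑ a, ∑ c, pc c a b x y z * pBA a b x y = ∑ a, pBA a b x y := by
        intro x z
        refine Finset.sum_congr rfl fun a _ => ?_
        rw [← Finset.sum_mul, hpc_sum, one_mul]
      rw [h, h, hBA_oneway b x x' y]
    · intro a b x y z z'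
      rw [← Finset.sum_mul, ← Finset.sum_mul, hpc_sum, hpc_sum]
  · intro a b c x y z
    rw [hp, hmix]
    ring
end
end

section
/- For any Hermitian ±1-observables A₀, A₁, B₀, B₁ (each squaring to the identity) on arbitrary Hilbert spaces, the operator S = A₀⊗B₀ + A₀⊗B₁ + A₁⊗B₀ − A₁⊗B₁ satisfies S² = 4·I + [A₀,A₁]⊗[B₁,B₀], and hence ‖S‖ ≤ 2√2 (Tsirelson's bound). -/
open Matrix Kronecker
open scoped Matrix.Norms.L2Operator

noncomputable section

lemma my_sub_kron {l p n q : Type*} (A B : Matrix l p ℂ) (C : Matrix n q ℂ) :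
    (A - B) ⊗ₖ C = A ⊗ₖ C - B ⊗ₖ C := by
  ext ⟨i, j⟩ ⟨k, l⟩
  simp [Matrix.kroneckerMap_apply, sub_mul]

lemma my_kron_sub {l p n q : Type*} (A : Matrix l p ℂ) (B C : Matrix n q ℂ) :
    A ⊗ₖ (B - C) = A ⊗ₖ B - A ⊗ₖ C := by
  ext ⟨i, j⟩ ⟨k, l⟩
  simp [Matrix.kroneckerMap_apply, mul_sub]

lemma my_kron_conjT {n m : Type*} (A : Matrix n n ℂ) (B : Matrix m m ℂ) :
    (A ⊗ₖ B)ᴴ = Aᴴ ⊗ₖ Bᴴ := by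
  ext ⟨i, j⟩ ⟨k, l⟩
  simp [Matrix.conjTranspose_apply, Matrix.kroneckerMap_apply]

lemma my_norm_one_le (n : Type*) [Fintype n] [DecidableEq n] :
    ‖(1 : Matrix n n ℂ)‖ ≤ 1 := by
  have h := Matrix.l2_opNorm_conjTranspose_mul_self (1 : Matrix n n ℂ)
  simp only [Matrix.conjTranspose_one, mul_one] at h
  nlinarith [norm_nonneg (1 : Matrix n n ℂ)]

lemma my_norm_le_one {n : Type*} [Fintype n] [DecidableEq n]
    (X : Matrix n n ℂ) (hX : Xᴴ = X) (hX2 : X * X = 1) : ‖X‖ ≤ 1 := by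
  have h := Matrix.l2_opNorm_conjTranspose_mul_self X
  rw [hX, hX2] at h
  nlinarith [norm_nonneg X, my_norm_one_le n]

/-- Tsirelson's bound: for Hermitian `±1`-observables `A₀, A₁` and `B₀, B₁` on (finite
dimensional) Hilbert spaces, the CHSH operator
`S = A₀⊗B₀ + A₀⊗B₁ + A₁⊗B₀ − A₁⊗B₁` satisfies `S² = 4·I + [A₀,A₁]⊗[B₁,B₀]`, and hence
`‖S‖ ≤ 2√2` in the operator norm. -/
theorem tsirelson_bound
    {n m : Type*} [Fintype n] [DecidableEq n] [Fintype m] [DecidableEq m]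
    (A₀ A₁ : Matrix n n ℂ) (B₀ B₁ : Matrix m m ℂ)
    (hA₀ : A₀ᴴ = A₀) (hA₁ : A₁ᴴ = A₁) (hB₀ : B₀ᴴ = B₀) (hB₁ : B₁ᴴ = B₁)
    (hA₀sq : A₀ * A₀ = 1) (hA₁sq : A₁ * A₁ = 1) (hB₀sq : B₀ * B₀ = 1) (hB₁sq : B₁ * B₁ = 1) :
    (A₀ ⊗ₖ B₀ + A₀ ⊗ₖ B₁ + A₁ ⊗ₖ B₀ - A₁ ⊗ₖ B₁) * (A₀ ⊗ₖ B₀ + A₀ ⊗ₖ B₁ + A₁ ⊗ₖ B₀ - A₁ ⊗ₖ B₁)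
      = (4 : ℂ) • (1 : Matrix (n × m) (n × m) ℂ)
          + (A₀ * A₁ - A₁ * A₀) ⊗ₖ (B₁ * B₀ - B₀ * B₁) ∧
    ‖A₀ ⊗ₖ B₀ + A₀ ⊗ₖ B₁ + A₁ ⊗ₖ B₀ - A₁ ⊗ₖ B₁‖ ≤ 2 * Real.sqrt 2 := by
  have key : (A₀ ⊗ₖ B₀ + A₀ ⊗ₖ B₁ + A₁ ⊗ₖ B₀ - A₁ ⊗ₖ B₁) *
      (A₀ ⊗ₖ B₀ + A₀ ⊗ₖ B₁ + A₁ ⊗ₖ B₀ - A₁ ⊗ₖ B₁)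
      = (4 : ℂ) • (1 : Matrix (n × m) (n × m) ℂ)
          + (A₀ * A₁ - A₁ * A₀) ⊗ₖ (B₁ * B₀ - B₀ * B₁) := by
    have h1 : ((4 : ℂ) • (1 : Matrix (n × m) (n × m) ℂ)) =
        (1 : Matrix n n ℂ) ⊗ₖ (1 : Matrix m m ℂ) + 1 ⊗ₖ 1 + 1 ⊗ₖ 1 + 1 ⊗ₖ 1 := by
      rw [Matrix.one_kronecker_one]
      module
    rw [h1]
    simp only [add_mul, sub_mul, mul_add, mul_sub, ← Matrix.mul_kronecker_mul,
      my_sub_kron, my_kron_sub, hA₀sq, hA₁sq, hB₀sq, hB₁sq]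
    abel
  refine ⟨key, ?_⟩
  set S := A₀ ⊗ₖ B₀ + A₀ ⊗ₖ B₁ + A₁ ⊗ₖ B₀ - A₁ ⊗ₖ B₁ with hS
  have hSH : Sᴴ = S := by
    simp only [hS, Matrix.conjTranspose_add, Matrix.conjTranspose_sub, my_kron_conjT,
      hA₀, hA₁, hB₀, hB₁]
  -- norms of the four kronecker factors
  have hk : ∀ (A : Matrix n n ℂ) (B : Matrix m m ℂ), Aᴴ = A → Bᴴ = B →
      A * A = 1 → B * B = 1 → ‖A ⊗ₖ B‖ ≤ 1 := by
    intro A B hA hB hA2 hB2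
    refine my_norm_le_one _ ?_ ?_
    · rw [my_kron_conjT, hA, hB]
    · rw [← Matrix.mul_kronecker_mul, hA2, hB2, Matrix.one_kronecker_one]
  -- commutator term as combination of products
  have hc : (A₀ * A₁ - A₁ * A₀) ⊗ₖ (B₁ * B₀ - B₀ * B₁)
      = (A₀ ⊗ₖ B₁) * (A₁ ⊗ₖ B₀) - (A₀ ⊗ₖ B₀) * (A₁ ⊗ₖ B₁)
        - (A₁ ⊗ₖ B₁) * (A₀ ⊗ₖ B₀) + (A₁ ⊗ₖ B₀) * (A₀ ⊗ₖ B₁) := by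
    simp only [my_sub_kron, my_kron_sub, Matrix.mul_kronecker_mul]
    abel
  have hcn : ‖(A₀ * A₁ - A₁ * A₀) ⊗ₖ (B₁ * B₀ - B₀ * B₁)‖ ≤ 4 := by
    rw [hc]
    have b1 := Matrix.l2_opNorm_mul (A₀ ⊗ₖ B₁) (A₁ ⊗ₖ B₀)
    have b2 := Matrix.l2_opNorm_mul (A₀ ⊗ₖ B₀) (A₁ ⊗ₖ B₁)
    have b3 := Matrix.l2_opNorm_mul (A₁ ⊗ₖ B₁) (A₀ ⊗ₖ B₀)
    have b4 := Matrix.l2_opNorm_mul (A₁ ⊗ₖ B₀) (A₀ ⊗ₖ B₁)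
    have n00 := hk A₀ B₀ hA₀ hB₀ hA₀sq hB₀sq
    have n01 := hk A₀ B₁ hA₀ hB₁ hA₀sq hB₁sq
    have n10 := hk A₁ B₀ hA₁ hB₀ hA₁sq hB₀sq
    have n11 := hk A₁ B₁ hA₁ hB₁ hA₁sq hB₁sq
    calc ‖(A₀ ⊗ₖ B₁) * (A₁ ⊗ₖ B₀) - (A₀ ⊗ₖ B₀) * (A₁ ⊗ₖ B₁)
        - (A₁ ⊗ₖ B₁) * (A₀ ⊗ₖ B₀) + (A₁ ⊗ₖ B₀) * (A₀ ⊗ₖ B₁)‖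
        ≤ ‖(A₀ ⊗ₖ B₁) * (A₁ ⊗ₖ B₀)‖ + ‖(A₀ ⊗ₖ B₀) * (A₁ ⊗ₖ B₁)‖
          + ‖(A₁ ⊗ₖ B₁) * (A₀ ⊗ₖ B₀)‖ + ‖(A₁ ⊗ₖ B₀) * (A₀ ⊗ₖ B₁)‖ := by
          refine le_trans (norm_add_le _ _) ?_
          gcongr
          refine le_trans (norm_sub_le _ _) ?_
          gcongr
          exact norm_sub_le _ _
      _ ≤ 4 := by
          nlinarith [norm_nonneg (A₀ ⊗ₖ B₁), norm_nonneg (A₁ ⊗ₖ B₀),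
            norm_nonneg (A₀ ⊗ₖ B₀), norm_nonneg (A₁ ⊗ₖ B₁)]
  have hS2 : ‖S * S‖ ≤ 8 := by
    rw [key]
    refine le_trans (norm_add_le _ _) ?_
    have : ‖(4 : ℂ) • (1 : Matrix (n × m) (n × m) ℂ)‖ ≤ 4 := by
      rw [norm_smul]
      have := my_norm_one_le (n × m)
      simp only [Complex.norm_ofNat]
      nlinarith
    linarith
  have hnorm : ‖S‖ * ‖S‖ ≤ 8 := by
    have h := Matrix.l2_opNorm_conjTranspose_mul_self S
    rw [hSH] at h
    linarith [hS2, h.ge, h.le]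
  have h8 : (8 : ℝ) = (2 * Real.sqrt 2) ^ 2 := by
    rw [mul_pow, Real.sq_sqrt (by norm_num : (2:ℝ) ≥ 0)]
    norm_num
  nlinarith [norm_nonneg S, Real.sqrt_nonneg 2, Real.sq_sqrt (by norm_num : (0:ℝ) ≤ 2)]
end
end

section
/- Decohering the control: if the two-SWITCH control system is in the classical mixture ½|00⟩⟨00| + ½|11⟩⟨11| instead of the entangled state, then for any unitaries U_A, U_B the final (post-control-measurement) joint target state is a mixture of product states ½ P[U_B U_A|0⟩ ⊗ U_B U_A|0⟩] + ½ P[U_A U_B|0⟩ ⊗ U_A U_B|0⟩], which is separable and hence satisfies CHSH ≤ 2. -/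
open Matrix Complex Kronecker ComplexOrder

noncomputable section

/-- The computational basis state `|0⟩`. -/
def e0 : Fin 2 → ℂ := ![1, 0]

/-- Projector onto a vector `v` : `P[v] i j = v i * conj (v j)`. -/
def projVec {α : Type*} (v : α → ℂ) : Matrix α α ℂ :=
  Matrix.of fun i j => v i * star (v j)

/-- The gate sequence applied by a SWITCH given the control value:
control `0` applies `U_B U_A`, control `1` applies `U_A U_B`. -/
def gateOf (UA UB : Matrix (Fin 2) (Fin 2) ℂ) : Fin 2 → Matrix (Fin 2) (Fin 2) ℂ :=
  ![UB * UA, UA * UB]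

/-- The classically mixed control state `½|00⟩⟨00| + ½|11⟩⟨11|` of the two control qubits. -/
def ρC : Matrix (Fin 2 × Fin 2) (Fin 2 × Fin 2) ℂ :=
  (1/2 : ℂ) • projVec (fun c : Fin 2 × Fin 2 => if c = (0, 0) then 1 else 0)
    + (1/2 : ℂ) • projVec (fun c : Fin 2 × Fin 2 => if c = (1, 1) then 1 else 0)

/-- The two-SWITCH operation on controls ⊗ targets: controlled on the (computational-basis)
control values, it applies the corresponding gate orders to the two targets. -/
def switchOp (UA UB : Matrix (Fin 2) (Fin 2) ℂ) :
    Matrix ((Fin 2 × Fin 2) × (Fin 2 × Fin 2)) ((Fin 2 × Fin 2) × (Fin 2 × Fin 2)) ℂ :=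
  Matrix.of fun p q =>
    (if p.1 = q.1 then 1 else 0) *
      (gateOf UA UB p.1.1 ⊗ₖ gateOf UA UB p.1.2) p.2 q.2

/-- The final target state: apply the SWITCH to `ρ_C ⊗ |00⟩⟨00|_T` and trace out
(measure and discard) the controls. -/
def finalTarget (UA UB : Matrix (Fin 2) (Fin 2) ℂ) : Matrix (Fin 2 × Fin 2) (Fin 2 × Fin 2) ℂ :=
  Matrix.of fun t t' => ∑ c : Fin 2 × Fin 2,
    (switchOp UA UB * (ρC ⊗ₖ projVec (fun p : Fin 2 × Fin 2 => e0 p.1 * e0 p.2))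
        * (switchOp UA UB)ᴴ) (c, t) (c, t')


lemma trace_projVec_mul {α : Type*} [Fintype α] (w : α → ℂ) (M : Matrix α α ℂ) :
    (projVec w * M).trace = star w ⬝ᵥ M.mulVec w := by
  simp only [Matrix.trace, Matrix.diag, Matrix.mul_apply, projVec, Matrix.of_apply,
    dotProduct, Matrix.mulVec, Pi.star_apply]
  rw [Finset.sum_comm]
  simp only [Finset.mul_sum]
  exact Finset.sum_congr rfl fun j _ => Finset.sum_congr rfl fun i _ => by ring

lemma dot_kron {α β : Type*} [Fintype α] [Fintype β] (x : α → ℂ) (y : β → ℂ)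
    (A : Matrix α α ℂ) (B : Matrix β β ℂ) :
    star (fun p : α × β => x p.1 * y p.2) ⬝ᵥ
        (A ⊗ₖ B).mulVec (fun p : α × β => x p.1 * y p.2)
      = (star x ⬝ᵥ A.mulVec x) * (star y ⬝ᵥ B.mulVec y) := by
  simp only [dotProduct, Matrix.mulVec, Matrix.kroneckerMap_apply, Pi.star_apply,
    Fintype.sum_prod_type, star_mul']
  rw [Finset.sum_mul_sum]
  refine Finset.sum_congr rfl fun i _ => Finset.sum_congr rfl fun j _ => ?_
  conv_rhs => rw [mul_mul_mul_comm, Finset.sum_mul_sum]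
  simp only [Finset.mul_sum]
  exact Finset.sum_congr rfl fun k _ => Finset.sum_congr rfl fun l _ => by ring

lemma herm_dot_real {n : Type*} [Fintype n] {A : Matrix n n ℂ} (hA : A.IsHermitian)
    (u : n → ℂ) : ((star u ⬝ᵥ A.mulVec u).re : ℂ) = star u ⬝ᵥ A.mulVec u := by
  have h : star (star u ⬝ᵥ A.mulVec u) = star u ⬝ᵥ A.mulVec u := by
    calc star (star u ⬝ᵥ A.mulVec u) = star (A.mulVec u) ⬝ᵥ u :=
          (Matrix.star_dotProduct _ _).symm
      _ = (star u ᵥ* Aᴴ) ⬝ᵥ u := by rw [Matrix.star_mulVec]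
      _ = star u ⬝ᵥ Aᴴ.mulVec u := (Matrix.dotProduct_mulVec _ _ _).symm
      _ = star u ⬝ᵥ A.mulVec u := by rw [hA.eq]
  have him : (star u ⬝ᵥ A.mulVec u).im = 0 := by
    have := congrArg Complex.im h
    simp only [Complex.star_def, Complex.conj_im] at this
    linarith
  exact Complex.ext (by simp) (by simp [him])

lemma herm_dot_bound {n : Type*} [Fintype n] [DecidableEq n] {A : Matrix n n ℂ}
    (hA : A.IsHermitian) (hA2 : A * A = 1) (u : n → ℂ) (hu : star u ⬝ᵥ u = 1) :
    |(star u ⬝ᵥ A.mulVec u).re| ≤ 1 := by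
  set x : EuclideanSpace ℂ n := (WithLp.equiv 2 _).symm u with hx
  set y : EuclideanSpace ℂ n := (WithLp.equiv 2 _).symm (A.mulVec u) with hy
  have hxy : (inner ℂ x y : ℂ) = star u ⬝ᵥ A.mulVec u := by
    rw [hx, hy, WithLp.equiv_symm_apply, EuclideanSpace.inner_toLp_toLp, dotProduct_comm]
  have hxx : (inner ℂ x x : ℂ) = 1 := by
    rw [hx, WithLp.equiv_symm_apply, EuclideanSpace.inner_toLp_toLp, dotProduct_comm]; exact hu
  have hyy : (inner ℂ y y : ℂ) = 1 := by
    rw [hy, WithLp.equiv_symm_apply, EuclideanSpace.inner_toLp_toLp, dotProduct_comm,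
      Matrix.star_mulVec,
      ← Matrix.dotProduct_mulVec, Matrix.mulVec_mulVec, hA.eq, hA2, Matrix.one_mulVec]
    exact hu
  have hnx : ‖x‖ = 1 := by rw [norm_eq_sqrt_re_inner (𝕜 := ℂ), hxx]; simp
  have hny : ‖y‖ = 1 := by rw [norm_eq_sqrt_re_inner (𝕜 := ℂ), hyy]; simp
  have h := norm_inner_le_norm (𝕜 := ℂ) x y
  rw [hxy, hnx, hny, one_mul] at h
  calc |(star u ⬝ᵥ A.mulVec u).re| ≤ ‖star u ⬝ᵥ A.mulVec u‖ :=
        Complex.abs_re_le_norm _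
    _ ≤ 1 := h

lemma chsh_real (a b c d : ℝ) (ha : |a| ≤ 1) (hb : |b| ≤ 1) (hc : |c| ≤ 1) (hd : |d| ≤ 1) :
    |a * c + a * d + b * c - b * d| ≤ 2 := by
  have h1 : a * c + a * d + b * c - b * d = a * (c + d) + b * (c - d) := by ring
  have h2 : |a * (c + d) + b * (c - d)| ≤ |a| * |c + d| + |b| * |c - d| := by
    calc |a * (c + d) + b * (c - d)| ≤ |a * (c + d)| + |b * (c - d)| := abs_add_le _ _
      _ = |a| * |c + d| + |b| * |c - d| := by rw [abs_mul, abs_mul]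
  have h3 : |a| * |c + d| + |b| * |c - d| ≤ |c + d| + |c - d| := by
    have := abs_nonneg (c + d); have := abs_nonneg (c - d)
    nlinarith
  have h4 : |c + d| + |c - d| ≤ 2 := by
    rcases abs_cases (c + d) with ⟨h, _⟩ | ⟨h, _⟩ <;>
      rcases abs_cases (c - d) with ⟨h', _⟩ | ⟨h', _⟩ <;>
      rcases abs_le.mp hc with ⟨_, _⟩ <;> rcases abs_le.mp hd with ⟨_, _⟩ <;> linarith
  rw [h1]; linarith

lemma pure_chsh {n : Type*} [Fintype n] [DecidableEq n] (w : n → ℂ)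
    (hw : star w ⬝ᵥ w = 1) (A₀ A₁ B₀ B₁ : Matrix n n ℂ)
    (hA₀ : A₀.IsHermitian) (hA₁ : A₁.IsHermitian) (hB₀ : B₀.IsHermitian)
    (hB₁ : B₁.IsHermitian) (sA₀ : A₀ * A₀ = 1) (sA₁ : A₁ * A₁ = 1)
    (sB₀ : B₀ * B₀ = 1) (sB₁ : B₁ * B₁ = 1) :
    ((projVec (fun p : n × n => w p.1 * w p.2) *
        (A₀ ⊗ₖ B₀ + A₀ ⊗ₖ B₁ + A₁ ⊗ₖ B₀ - A₁ ⊗ₖ B₁)).trace).im = 0 ∧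
    |((projVec (fun p : n × n => w p.1 * w p.2) *
        (A₀ ⊗ₖ B₀ + A₀ ⊗ₖ B₁ + A₁ ⊗ₖ B₀ - A₁ ⊗ₖ B₁)).trace).re| ≤ 2 := by
  have ht : (projVec (fun p : n × n => w p.1 * w p.2) *
        (A₀ ⊗ₖ B₀ + A₀ ⊗ₖ B₁ + A₁ ⊗ₖ B₀ - A₁ ⊗ₖ B₁)).trace
      = (star w ⬝ᵥ A₀.mulVec w) * (star w ⬝ᵥ B₀.mulVec w)
        + (star w ⬝ᵥ A₀.mulVec w) * (star w ⬝ᵥ B₁.mulVec w)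
        + (star w ⬝ᵥ A₁.mulVec w) * (star w ⬝ᵥ B₀.mulVec w)
        - (star w ⬝ᵥ A₁.mulVec w) * (star w ⬝ᵥ B₁.mulVec w) := by
    rw [mul_sub, mul_add, mul_add, Matrix.trace_sub, Matrix.trace_add, Matrix.trace_add,
      trace_projVec_mul, trace_projVec_mul, trace_projVec_mul, trace_projVec_mul,
      dot_kron, dot_kron, dot_kron, dot_kron]
  have hc : (projVec (fun p : n × n => w p.1 * w p.2) *
        (A₀ ⊗ₖ B₀ + A₀ ⊗ₖ B₁ + A₁ ⊗ₖ B₀ - A₁ ⊗ₖ B₁)).trace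
      = (((star w ⬝ᵥ A₀.mulVec w).re * (star w ⬝ᵥ B₀.mulVec w).re
        + (star w ⬝ᵥ A₀.mulVec w).re * (star w ⬝ᵥ B₁.mulVec w).re
        + (star w ⬝ᵥ A₁.mulVec w).re * (star w ⬝ᵥ B₀.mulVec w).re
        - (star w ⬝ᵥ A₁.mulVec w).re * (star w ⬝ᵥ B₁.mulVec w).re : ℝ) : ℂ) := by
    rw [ht]
    conv_lhs => rw [← herm_dot_real hA₀ w, ← herm_dot_real hA₁ w, ← herm_dot_real hB₀ w,
      ← herm_dot_real hB₁ w]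
    push_cast
    ring
  rw [hc]
  refine ⟨by simp, ?_⟩
  simp only [Complex.ofReal_re]
  exact chsh_real _ _ _ _ (herm_dot_bound hA₀ sA₀ w hw) (herm_dot_bound hA₁ sA₁ w hw)
    (herm_dot_bound hB₀ sB₀ w hw) (herm_dot_bound hB₁ sB₁ w hw)

lemma unit_mulVec_e0 {U : Matrix (Fin 2) (Fin 2) ℂ}
    (hU : U ∈ Matrix.unitaryGroup (Fin 2) ℂ) :
    star (U.mulVec e0) ⬝ᵥ U.mulVec e0 = 1 := by
  rw [Matrix.star_mulVec, ← Matrix.dotProduct_mulVec, Matrix.mulVec_mulVec,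
    ← Matrix.star_eq_conjTranspose, (Matrix.mem_unitaryGroup_iff'.mp hU),
    Matrix.one_mulVec]
  simp [e0, dotProduct, Fin.sum_univ_two]

lemma finalTarget_eq (UA UB : Matrix (Fin 2) (Fin 2) ℂ) :
    finalTarget UA UB
      = (1/2 : ℂ) • projVec (fun p : Fin 2 × Fin 2 =>
            (UB * UA).mulVec e0 p.1 * (UB * UA).mulVec e0 p.2)
        + (1/2 : ℂ) • projVec (fun p : Fin 2 × Fin 2 =>
            (UA * UB).mulVec e0 p.1 * (UA * UB).mulVec e0 p.2) := by
  ext ⟨t1, t2⟩ ⟨s1, s2⟩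
  simp only [finalTarget, switchOp, ρC, projVec, gateOf, e0, Matrix.mul_apply,
    Matrix.conjTranspose_apply, Matrix.kroneckerMap_apply, Matrix.of_apply,
    Matrix.add_apply, Matrix.smul_apply, Matrix.mulVec, dotProduct,
    Fintype.sum_prod_type, Fin.sum_univ_two, smul_eq_mul, Prod.mk.injEq,
    Matrix.cons_val_zero, Matrix.cons_val_one, Matrix.head_cons, star_mul', star_one,
    star_zero, mul_ite, ite_mul, mul_one, one_mul, mul_zero, zero_mul, if_true, if_false,
    and_self, and_true, true_and, Fin.zero_eq_one_iff, Fin.one_eq_zero_iff, Nat.succ_ne_self,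
    Nat.reduceEqDiff, add_zero, zero_add]
  ring

set_option maxHeartbeats 1600000 in
/-- Decohering the control: with the controls in the classical mixture `½|00⟩⟨00| + ½|11⟩⟨11|`,
the final joint target state is the separable mixture of product states
`½ P[U_B U_A|0⟩ ⊗ U_B U_A|0⟩] + ½ P[U_A U_B|0⟩ ⊗ U_A U_B|0⟩]`, which satisfies `CHSH ≤ 2`. -/
theorem decohered_control_gives_separable_target
    (UA UB : Matrix (Fin 2) (Fin 2) ℂ)
    (hUA : UA ∈ Matrix.unitaryGroup (Fin 2) ℂ) (hUB : UB ∈ Matrix.unitaryGroup (Fin 2) ℂ) :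
    finalTarget UA UB
      = (1/2 : ℂ) • projVec (fun p : Fin 2 × Fin 2 =>
            (UB * UA).mulVec e0 p.1 * (UB * UA).mulVec e0 p.2)
        + (1/2 : ℂ) • projVec (fun p : Fin 2 × Fin 2 =>
            (UA * UB).mulVec e0 p.1 * (UA * UB).mulVec e0 p.2) ∧
    ∀ A₀ A₁ B₀ B₁ : Matrix (Fin 2) (Fin 2) ℂ,
      A₀.IsHermitian → A₁.IsHermitian → B₀.IsHermitian → B₁.IsHermitian →
      A₀ * A₀ = 1 → A₁ * A₁ = 1 → B₀ * B₀ = 1 → B₁ * B₁ = 1 →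
      |((finalTarget UA UB * (A₀ ⊗ₖ B₀ + A₀ ⊗ₖ B₁ + A₁ ⊗ₖ B₀ - A₁ ⊗ₖ B₁)).trace).re| ≤ 2 := by
  refine ⟨finalTarget_eq UA UB, ?_⟩
  intro A₀ A₁ B₀ B₁ hA₀ hA₁ hB₀ hB₁ sA₀ sA₁ sB₀ sB₁
  have hu := unit_mulVec_e0 (mul_mem hUB hUA)
  have hv := unit_mulVec_e0 (mul_mem hUA hUB)
  have hpu := pure_chsh ((UB * UA).mulVec e0) hu A₀ A₁ B₀ B₁ hA₀ hA₁ hB₀ hB₁ sA₀ sA₁ sB₀ sB₁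
  have hpv := pure_chsh ((UA * UB).mulVec e0) hv A₀ A₁ B₀ B₁ hA₀ hA₁ hB₀ hB₁ sA₀ sA₁ sB₀ sB₁
  rw [finalTarget_eq UA UB, Matrix.add_mul, Matrix.smul_mul, Matrix.smul_mul,
    Matrix.trace_add, Matrix.trace_smul, Matrix.trace_smul]
  simp only [smul_eq_mul, show (1/2 : ℂ) = ((1/2 : ℝ) : ℂ) by norm_num, Complex.add_re,
    Complex.re_ofReal_mul]
  refine le_trans (abs_add_le _ _) ?_
  rw [abs_mul, abs_mul, abs_of_pos (show (0:ℝ) < 1/2 by norm_num)]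
  linarith [hpu.2, hpv.2]
end
end
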